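/- Let p ≥ 2 and let ℓ_1 ≥ ℓ_2 ≥ ⋯ ≥ ℓ_p ≥ 2 be even integers; set δ = Σ_{i=1}^p ℓ_i/2 and s_j = Σ_{i=1}^j ℓ_i for j ∈ [p]. If n > max{ 3δ − 1, (δ/2)(1 + (ℓ_1 − 2)/(2δ − ℓ_1)) }, then for every j ∈ [p], (δ − 1)(n − δ/2) > [n, s_j, ℓ_j]. -/

import Mathlib

open SimpleGraph Finset

/-- `G` contains a copy of `H` (a subgraph isomorphic to `H`). -/
def ContainsCopy {V W : Type*} (H : SimpleGraph W) (G : SimpleGraph V) : Prop :=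
  ∃ f : H →g G, Function.Injective f

/-- `G` is `H`-free: it contains no subgraph isomorphic to `H`. -/
def IsFree {V W : Type*} (H : SimpleGraph W) (G : SimpleGraph V) : Prop :=
  ¬ ContainsCopy H G

/-- The Turán number `ex(n, H)`: the maximum number of edges of an `H`-free
graph on `n` vertices. -/
noncomputable def exNum {W : Type*} (n : ℕ) (H : SimpleGraph W) : ℕ :=
  sSup {m | ∃ G : SimpleGraph (Fin n), IsFree H G ∧ G.edgeSet.ncard = m}

/-- `G` is an extremal (`H`-free with `ex(n,H)` edges) graph on `n` vertices. -/
def IsExtremal {W : Type*} (n : ℕ) (H : SimpleGraph W) (G : SimpleGraph (Fin n)) : Prop :=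
  IsFree H G ∧ G.edgeSet.ncard = exNum n H

/-- Disjoint union of an indexed family of graphs. -/
def sigmaUnion {ι : Type*} {V : ι → Type*} (G : ∀ i, SimpleGraph (V i)) :
    SimpleGraph (Σ i, V i) where
  Adj x y := ∃ (i : ι) (u v : V i), (G i).Adj u v ∧ x = ⟨i, u⟩ ∧ y = ⟨i, v⟩
  symm := ⟨by
    rintro x y ⟨i, u, v, h, rfl, rfl⟩
    exact ⟨i, v, u, h.symm, rfl, rfl⟩⟩
  loopless := ⟨by
    rintro x ⟨i, u, v, h, rfl, he⟩
    simp only [Sigma.mk.inj_iff, heq_eq_eq, true_and] at he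
    exact (G i).irrefl (he ▸ h)⟩

/-- Disjoint union of two graphs on the sum type. -/
def dUnion {α β : Type*} (G : SimpleGraph α) (H : SimpleGraph β) :
    SimpleGraph (α ⊕ β) where
  Adj x y := Sum.LiftRel G.Adj H.Adj x y
  symm := ⟨by
    rintro x y (h | h)
    · exact Sum.LiftRel.inl h.symm
    · exact Sum.LiftRel.inr h.symm⟩
  loopless := ⟨by
    rintro x (h | h)
    · exact G.irrefl h
    · exact H.irrefl h⟩

/-- The join `G ∨ H` of two graphs: disjoint union plus all edges in between. -/
def joinG {α β : Type*} (G : SimpleGraph α) (H : SimpleGraph β) :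
    SimpleGraph (α ⊕ β) where
  Adj x y := match x, y with
    | .inl u, .inl v => G.Adj u v
    | .inr u, .inr v => H.Adj u v
    | .inl _, .inr _ => True
    | .inr _, .inl _ => True
  symm := ⟨by
    rintro (u | u) (v | v) h
    · exact h.symm
    · trivial
    · trivial
    · exact h.symm⟩
  loopless := ⟨by
    rintro (u | u) h
    · exact G.irrefl h
    · exact H.irrefl h⟩

/-- The star `S_a` with `a` edges (`a + 1` vertices), centered at `0`. -/
def starGraph (a : ℕ) : SimpleGraph (Fin (a + 1)) where
  Adj x y := x ≠ y ∧ (x = 0 ∨ y = 0)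
  symm := ⟨fun _ _ ⟨h1, h2⟩ => ⟨h1.symm, h2.symm⟩⟩
  loopless := ⟨fun _ h => h.1 rfl⟩

/-- The matching `M_k`: `(k/2) K_2` if `k` is even, `((k-1)/2) K_2 ∪ K_1` if `k` is odd. -/
def matchingGraph (k : ℕ) : SimpleGraph (Fin k) where
  Adj x y := x ≠ y ∧ (x : ℕ) / 2 = (y : ℕ) / 2
  symm := ⟨fun _ _ ⟨h1, h2⟩ => ⟨h1.symm, h2.symm⟩⟩
  loopless := ⟨fun _ h => h.1 rfl⟩

/-- `k` disjoint copies of the graph `G`. -/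
def kCopies {α : Type*} (k : ℕ) (G : SimpleGraph α) : SimpleGraph (Σ _ : Fin k, α) :=
  sigmaUnion fun _ => G

/-- The linear forest `⋃_{i=1}^p P_{ℓ i}`. -/
def pathForest (p : ℕ) (ℓ : Fin p → ℕ) : SimpleGraph (Σ i, Fin (ℓ i)) :=
  sigmaUnion fun i => pathGraph (ℓ i)

/-- The star forest `⋃_{j=1}^q S_{a j}`. -/
def starForest (q : ℕ) (a : Fin q → ℕ) : SimpleGraph (Σ j, Fin (a j + 1)) :=
  sigmaUnion fun j => starGraph (a j)

/-- The path-star forest `(⋃_{i=1}^p P_{ℓ i}) ∪ (⋃_{j=1}^q S_{a j})`. -/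
def pathStarForest (p q : ℕ) (ℓ : Fin p → ℕ) (a : Fin q → ℕ) :
    SimpleGraph ((Σ i, Fin (ℓ i)) ⊕ (Σ j, Fin (a j + 1))) :=
  dUnion (pathForest p ℓ) (starForest q a)

/-- `δ_F = Σ_i ⌊ℓ_i / 2⌋`. -/
def deltaF (p : ℕ) (ℓ : Fin p → ℕ) : ℕ := ∑ i, ℓ i / 2

/-- `μ_F = 1` if (`p = 1` and `ℓ_1` even) or (`p ≥ 2` and some `ℓ_i ≠ 3`), else `1/2`. -/
def muF (p : ℕ) (ℓ : Fin p → ℕ) : ℚ :=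
  if (p = 1 ∧ ∀ i, Even (ℓ i)) ∨ (2 ≤ p ∧ ∃ i, ℓ i ≠ 3) then 1 else 1/2

/-- `β_F = q + δ_F − μ_F`. -/
def betaF (p q : ℕ) (ℓ : Fin p → ℕ) : ℚ :=
  (q : ℚ) + (deltaF p ℓ : ℚ) - muF p ℓ

/-- `G_1(n,k) = K_k ∨ K̄_{n-k}`. -/
def g1 (n k : ℕ) : SimpleGraph (Fin k ⊕ Fin (n - k)) :=
  joinG (⊤ : SimpleGraph (Fin k)) (⊥ : SimpleGraph (Fin (n - k)))

/-- `G_1⁺(n,k) = K_k ∨ (K_2 ∪ K̄_{n-k-2})`. -/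
def g1plus (n k : ℕ) : SimpleGraph (Fin k ⊕ (Fin 2 ⊕ Fin (n - k - 2))) :=
  joinG (⊤ : SimpleGraph (Fin k))
    (dUnion (⊤ : SimpleGraph (Fin 2)) (⊥ : SimpleGraph (Fin (n - k - 2))))

/-- `G_2(n,k,ℓ) = K_k ∨ (d K_{ℓ-1} ∪ K_r)` where `n = k + d(ℓ-1) + r`. -/
def g2 (k d ℓ r : ℕ) :
    SimpleGraph (Fin k ⊕ ((Σ _ : Fin d, Fin (ℓ - 1)) ⊕ Fin r)) :=
  joinG (⊤ : SimpleGraph (Fin k))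
    (dUnion (kCopies d (⊤ : SimpleGraph (Fin (ℓ - 1)))) (⊤ : SimpleGraph (Fin r)))

/-- `G(s) = K_q ∨ ( (d-s-1) K_{ℓ-1} ∪ ( K_{(ℓ-2)/2} ∨ K̄_{ℓ/2 + s(ℓ-1) + r} ) )`. -/
def gS (q ℓ d r s : ℕ) :
    SimpleGraph (Fin q ⊕ ((Σ _ : Fin (d - s - 1), Fin (ℓ - 1)) ⊕
      (Fin ((ℓ - 2) / 2) ⊕ Fin (ℓ / 2 + s * (ℓ - 1) + r)))) :=
  joinG (⊤ : SimpleGraph (Fin q))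
    (dUnion (kCopies (d - s - 1) (⊤ : SimpleGraph (Fin (ℓ - 1))))
      (joinG (⊤ : SimpleGraph (Fin ((ℓ - 2) / 2)))
        (⊥ : SimpleGraph (Fin (ℓ / 2 + s * (ℓ - 1) + r)))))

theorem bracket_lt_lemma (p : ℕ) (ℓ : Fin p → ℕ) (hp : 2 ≤ p)
    (hmono : Antitone ℓ) (hℓ2 : ∀ i, 2 ≤ ℓ i) (heven : ∀ i, Even (ℓ i)) :
    let δ : ℕ := ∑ i, ℓ i / 2
    let ℓ₁ : ℕ := ℓ ⟨0, by omega⟩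
    ∀ n : ℕ,
      max (3 * (δ : ℚ) - 1)
        ((δ : ℚ) / 2 * (1 + ((ℓ₁ : ℚ) - 2) / (2 * (δ : ℚ) - (ℓ₁ : ℚ)))) < (n : ℚ) →
      ∀ j : Fin p, ∀ d r : ℕ,
        n = (∑ i ∈ Finset.univ.filter (· ≤ j), ℓ i) - 1 + d * (ℓ j - 1) + r →
        r < ℓ j - 1 →
        ((Nat.choose ((∑ i ∈ Finset.univ.filter (· ≤ j), ℓ i) - 1) 2 +
            d * Nat.choose (ℓ j - 1) 2 + Nat.choose r 2 : ℕ) : ℚ) <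
          ((δ : ℚ) - 1) * ((n : ℚ) - (δ : ℚ) / 2) := by
  intro δ ℓ₁ n hn j d r hneq hrlt
  have hδdef : δ = ∑ i, ℓ i / 2 := rfl
  have hℓ₁def : ℓ₁ = ℓ ⟨0, by omega⟩ := rfl
  set S : ℕ := ∑ i ∈ Finset.univ.filter (· ≤ j), ℓ i with hSdef
  set L : ℕ := ℓ j with hLdef
  have hL2 : 2 ≤ L := hℓ2 j
  have h0j : (⟨0, by omega⟩ : Fin p) ≤ j := by
    simp [Fin.le_def]
  have hLℓ₁ : L ≤ ℓ₁ := hmono h0j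
  -- sum of all ℓ equals 2δ
  have hsum2 : ∑ i, ℓ i = 2 * δ := by
    rw [hδdef, Finset.mul_sum]
    refine Finset.sum_congr rfl fun i _ => ?_
    obtain ⟨c, hc⟩ := heven i
    omega
  have hSle : S ≤ 2 * δ := by
    rw [← hsum2, hSdef]
    exact Finset.sum_le_sum_of_subset (Finset.filter_subset _ _)
  have hLS : L ≤ S := by
    rw [hSdef, hLdef]
    exact Finset.single_le_sum (fun i _ => Nat.zero_le _) (by simp)
  have hℓ₁S : ℓ₁ ≤ S := by
    rw [hSdef, hℓ₁def]
    exact Finset.single_le_sum (fun i _ => Nat.zero_le _) (by simp [h0j])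
  -- ℓ₁ + 2 ≤ 2δ
  have hℓ₁2δ : ℓ₁ + 2 ≤ 2 * δ := by
    rw [← hsum2]
    have h1lt : (1 : ℕ) < p := by omega
    have hne : (⟨1, h1lt⟩ : Fin p) ≠ ⟨0, by omega⟩ := by simp [Fin.ext_iff]
    have := Finset.add_sum_erase Finset.univ ℓ (Finset.mem_univ (⟨0, by omega⟩ : Fin p))
    have h2 : ℓ ⟨1, h1lt⟩ ≤ ∑ i ∈ Finset.univ.erase (⟨0, by omega⟩ : Fin p), ℓ i :=
      Finset.single_le_sum (fun i _ => Nat.zero_le _) (by simp [hne])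
    have := hℓ2 ⟨1, h1lt⟩
    omega
  have hδ2 : 2 ≤ δ := by omega
  -- thresholds
  have hn3 : 3 * δ ≤ n := by
    have h := lt_of_le_of_lt (le_max_left _ _) hn
    have : (3 * δ : ℚ) < (n : ℚ) + 1 := by push_cast; linarith
    exact_mod_cast Nat.lt_add_one_iff.mp (by exact_mod_cast this)
  have hc : (0 : ℚ) < 2 * (δ : ℚ) - (ℓ₁ : ℚ) := by
    have : (ℓ₁ : ℚ) + 2 ≤ 2 * δ := by exact_mod_cast hℓ₁2δ
    linarith
  have hn2 : (δ : ℚ) * ((δ : ℚ) - 1) < (n : ℚ) * (2 * (δ : ℚ) - (ℓ₁ : ℚ)) := by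
    have h := lt_of_le_of_lt (le_max_right _ _) hn
    have e : (δ : ℚ) / 2 * (1 + ((ℓ₁ : ℚ) - 2) / (2 * (δ : ℚ) - (ℓ₁ : ℚ)))
        = (δ : ℚ) * ((δ : ℚ) - 1) / (2 * (δ : ℚ) - (ℓ₁ : ℚ)) := by
      rw [one_add_div hc.ne', ← mul_div_assoc]; congr 1
      ring
    rw [e, div_lt_iff₀ hc] at h
    linarith [h]
  -- rational versions of facts
  have hSQ : (1 : ℕ) ≤ S := by omega
  have hLQ : (1 : ℕ) ≤ L := by omega
  have hneqQ : (n : ℚ) = ((S : ℚ) - 1) + (d : ℚ) * ((L : ℚ) - 1) + (r : ℚ) := by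
    have : n = (S - 1) + d * (L - 1) + r := hneq
    push_cast [this, Nat.cast_sub hSQ, Nat.cast_sub hLQ]
    ring
  have hrle : (r : ℚ) ≤ (L : ℚ) - 2 := by
    have : r ≤ L - 2 := by omega
    have h2 : (r : ℚ) ≤ ((L - 2 : ℕ) : ℚ) := by exact_mod_cast this
    rwa [Nat.cast_sub (by omega)] at h2
  -- key inequality
  have key : ((S : ℚ) - 1) * ((S : ℚ) - (L : ℚ)) + (δ : ℚ) * ((δ : ℚ) - 1)
      < (n : ℚ) * (2 * (δ : ℚ) - (L : ℚ)) := by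
    by_cases hj : j = ⟨0, by omega⟩
    · -- j = 0 : S = L = ℓ₁
      have hSL : S = ℓ₁ := by
        rw [hSdef, hℓ₁def, hj]
        rw [show Finset.univ.filter (· ≤ (⟨0, by omega⟩ : Fin p)) = {(⟨0, by omega⟩ : Fin p)} from by
          ext i; simp [Fin.le_def, Fin.ext_iff, Nat.le_zero]]
        simp
      have hLe : L = ℓ₁ := by rw [hLdef, hℓ₁def, hj]
      rw [hSL, hLe]
      nlinarith [hn2]
    · -- j ≠ 0 : L ≤ δ
      have hLδ : L ≤ δ := by
        have hne : j ≠ (⟨0, by omega⟩ : Fin p) := hj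
        have h1 := Finset.add_sum_erase Finset.univ ℓ (Finset.mem_univ (⟨0, by omega⟩ : Fin p))
        have h2 : ℓ j ≤ ∑ i ∈ Finset.univ.erase (⟨0, by omega⟩ : Fin p), ℓ i :=
          Finset.single_le_sum (fun i _ => Nat.zero_le _) (by simp [hne])
        have := hmono h0j
        rw [hℓ₁def] at hLℓ₁
        omega
      have hLδQ : (L : ℚ) ≤ (δ : ℚ) := by exact_mod_cast hLδ
      have hSleQ : (S : ℚ) ≤ 2 * (δ : ℚ) := by exact_mod_cast hSle
      have hLSQ : (L : ℚ) ≤ (S : ℚ) := by exact_mod_cast hLS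
      have hL2Q : (2 : ℚ) ≤ (L : ℚ) := by exact_mod_cast hL2
      have hδ2Q : (2 : ℚ) ≤ (δ : ℚ) := by exact_mod_cast hδ2
      have hn3Q : 3 * (δ : ℚ) ≤ (n : ℚ) := by exact_mod_cast hn3
      have t1 : (0:ℚ) ≤ ((n:ℚ) - 3*δ) * (2*(δ:ℚ) - L) :=
        mul_nonneg (by linarith) (by linarith)
      have t2 : (0:ℚ) ≤ ((S:ℚ) - 1) * (2*(δ:ℚ) - S) :=
        mul_nonneg (by linarith) (by linarith)
      have t3 : (0:ℚ) ≤ (2*(δ:ℚ) - S) * (2*(δ:ℚ) - L) :=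
        mul_nonneg (by linarith) (by linarith)
      have t4 : (0:ℚ) ≤ ((δ:ℚ) + 1) * ((δ:ℚ) - L) :=
        mul_nonneg (by linarith) (by linarith)
      linarith [t1, t2, t3, t4]
  -- finish
  have hrr : (r : ℚ) * ((r : ℚ) - 1) ≤ (r : ℚ) * ((L : ℚ) - 2) := by
    have h0 : (0 : ℚ) ≤ (r : ℚ) := Nat.cast_nonneg r
    have := mul_nonneg h0 (by linarith : (0:ℚ) ≤ (L:ℚ) - 1 - r)
    nlinarith [this]
  have hmul : (n : ℚ) * ((L : ℚ) - 2)
      = ((S : ℚ) - 1) * ((L : ℚ) - 2) + (d : ℚ) * ((L : ℚ) - 1) * ((L : ℚ) - 2)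
        + (r : ℚ) * ((L : ℚ) - 2) := by
    rw [hneqQ]; ring
  push_cast [Nat.cast_choose_two, Nat.cast_sub hSQ, Nat.cast_sub hLQ]
  linarith [key, hrr, hmul]
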